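/- Let (X,μ) be a non-atomic probability space, T a tree on X, and M_T the associated dyadic maximal operator. Let g : (0,1] → [0,∞) be non-increasing and integrable with f = ∫₀¹ g(u) du, and let φ : X → [0,∞) be measurable with decreasing rearrangement φ* = g. Then for every λ > f, |{t ∈ (0,1] : (M_T φ)*(t) ≥ λ}| ≤ |{t ∈ (0,1] : (1/t) ∫₀^t g(u) du ≥ λ}|, where (M_T φ)* denotes the decreasing rearrangement of M_T φ and |·| denotes Lebesgue measure. -/

import Mathlib

open MeasureTheory Set
open scoped ENNReal NNReal

/-- The generations of a tree determined by the child map `C`. -/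
def treeGen {X : Type*} (C : Set X → Set (Set X)) : ℕ → Set (Set X)
  | 0 => {Set.univ}
  | (m+1) => ⋃ I ∈ treeGen C m, C I

/-- `T` is a tree on the probability space `(X, μ)` with child map `C`. -/
structure IsTree {X : Type*} [MeasurableSpace X] (μ : Measure X)
    (T : Set (Set X)) (C : Set X → Set (Set X)) : Prop where
  univ_mem : Set.univ ∈ T
  measurableSet : ∀ I ∈ T, MeasurableSet I
  pos : ∀ I ∈ T, 0 < μ I
  child_sub_tree : ∀ I ∈ T, C I ⊆ T
  child_countable : ∀ I ∈ T, (C I).Countable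
  child_nontriv : ∀ I ∈ T, ∃ J ∈ C I, ∃ K ∈ C I, J ≠ K
  child_subset : ∀ I ∈ T, ∀ J ∈ C I, J ⊆ I
  child_disjoint : ∀ I ∈ T, ∀ J ∈ C I, ∀ K ∈ C I, J ≠ K → Disjoint J K
  child_cover : ∀ I ∈ T, I = ⋃₀ C I
  eq_gen : T = ⋃ m, treeGen C m
  gen_small : Filter.Tendsto (fun m => ⨆ I ∈ treeGen C m, μ I) Filter.atTop (nhds 0)

/-- The dyadic maximal operator associated to the tree `T`. -/
noncomputable def maxT {X : Type*} [MeasurableSpace X] (μ : Measure X)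
    (T : Set (Set X)) (φ : X → ℝ) (x : X) : ℝ :=
  sSup {r : ℝ | ∃ I ∈ T, x ∈ I ∧ r = (∫ u in I, |φ u| ∂μ) / (μ I).toReal}

/-- `φ : X → ℝ` has decreasing rearrangement `g : (0,1] → ℝ`. -/
def HasRearrangement {X : Type*} [MeasurableSpace X] (μ : Measure X)
    (φ : X → ℝ) (g : ℝ → ℝ) : Prop :=
  ∀ l : ℝ, 0 ≤ l → μ {x | l < φ x} = volume {t ∈ Set.Ioc (0:ℝ) 1 | l < g t}

/-- `H_p(z) = -(p-1) z^p + p z^{p-1}`. -/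
noncomputable def Hfun (p z : ℝ) : ℝ := -(p-1) * z ^ p + p * z ^ (p-1)

/-- `ω_p`, the inverse function of `H_p : [1, p/(p-1)] → [0,1]`. -/
noncomputable def omegaFun (p b : ℝ) : ℝ :=
  sSup {z : ℝ | z ∈ Set.Icc 1 (p/(p-1)) ∧ Hfun p z = b}

/-- The decreasing rearrangement `ψ*(t) = sup_{e ⊆ X, μ(e) = t} inf_{x ∈ e} ψ(x)`. -/
noncomputable def decRearr {X : Type*} [MeasurableSpace X] (μ : Measure X)
    (ψ : X → ℝ) (t : ℝ) : ℝ :=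
  sSup {r : ℝ | ∃ e : Set X, μ e = ENNReal.ofReal t ∧ r = sInf (ψ '' e)}

section Aux
variable {X : Type*} [MeasurableSpace X] {μ : Measure X}
  {T : Set (Set X)} {C : Set X → Set (Set X)}

lemma treeGen_subset (hT : IsTree μ T C) (m : ℕ) : treeGen C m ⊆ T := by
  intro I hI; rw [hT.eq_gen]; exact Set.mem_iUnion.2 ⟨m, hI⟩

lemma treeGen_countable (hT : IsTree μ T C) : ∀ m, (treeGen C m).Countable := by
  intro m; induction m with
  | zero => exact Set.countable_singleton _
  | succ m ih =>
    exact Set.Countable.biUnion ih fun I hI => hT.child_countable I (treeGen_subset hT m hI)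

lemma tree_countable (hT : IsTree μ T C) : T.Countable := by
  rw [hT.eq_gen]; exact Set.countable_iUnion (treeGen_countable hT)

lemma treeGen_disj (hT : IsTree μ T C) :
    ∀ m, ∀ I ∈ treeGen C m, ∀ J ∈ treeGen C m, I = J ∨ Disjoint I J := by
  intro m; induction m with
  | zero =>
    intro I hI J hJ
    left
    rcases hI with rfl
    rcases hJ with rfl
    rfl
  | succ m ih =>
    intro I hI J hJ
    obtain ⟨I₁, hI₁, hIc⟩ := Set.mem_iUnion₂.1 hI
    obtain ⟨J₁, hJ₁, hJc⟩ := Set.mem_iUnion₂.1 hJ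
    rcases ih I₁ hI₁ J₁ hJ₁ with h | h
    · subst h
      by_cases hIJ : I = J
      · exact Or.inl hIJ
      · exact Or.inr (hT.child_disjoint I₁ (treeGen_subset hT m hI₁) I hIc J hJc hIJ)
    · exact Or.inr (h.mono (hT.child_subset I₁ (treeGen_subset hT m hI₁) I hIc)
        (hT.child_subset J₁ (treeGen_subset hT m hJ₁) J hJc))

lemma treeGen_ancestor (hT : IsTree μ T C) :
    ∀ n m, m ≤ n → ∀ J ∈ treeGen C n, ∃ I ∈ treeGen C m, J ⊆ I := by
  intro n; induction n with
  | zero =>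
    intro m hm J hJ
    exact ⟨J, by simpa [Nat.le_zero.1 hm] using hJ, subset_rfl⟩
  | succ n ih =>
    intro m hm J hJ
    rcases Nat.eq_or_lt_of_le hm with h | h
    · exact ⟨J, by rw [h]; exact hJ, subset_rfl⟩
    · obtain ⟨J₁, hJ₁, hJc⟩ := Set.mem_iUnion₂.1 hJ
      obtain ⟨I, hI, hsub⟩ := ih m (Nat.lt_succ_iff.1 h) J₁ hJ₁
      exact ⟨I, hI, (hT.child_subset J₁ (treeGen_subset hT n hJ₁) J hJc).trans hsub⟩

lemma tree_exists_maximal (hT : IsTree μ T C) {F : Set (Set X)} (hFT : F ⊆ T)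
    {I : Set X} (hI : I ∈ F) (hne : I.Nonempty) :
    ∃ J ∈ F, I ⊆ J ∧ ∀ K ∈ F, J ⊆ K → K = J := by
  classical
  have hex : ∃ n, ∃ J ∈ treeGen C n, J ∈ F ∧ I ⊆ J := by
    have hIT := hFT hI
    rw [hT.eq_gen] at hIT
    obtain ⟨m, hm⟩ := Set.mem_iUnion.1 hIT
    exact ⟨m, I, hm, hI, subset_rfl⟩
  obtain ⟨J₀, hJ₀gen, hJ₀F, hIJ₀⟩ := Nat.find_spec hex
  refine ⟨J₀, hJ₀F, hIJ₀, ?_⟩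
  intro K hKF hJK
  have hKT := hFT hKF
  rw [hT.eq_gen] at hKT
  obtain ⟨n, hKn⟩ := Set.mem_iUnion.1 hKT
  have hn : Nat.find hex ≤ n := by
    by_contra h
    push_neg at h
    exact Nat.find_min hex h ⟨K, hKn, hKF, hIJ₀.trans hJK⟩
  obtain ⟨A, hA, hKA⟩ := treeGen_ancestor hT n (Nat.find hex) hn K hKn
  rcases treeGen_disj hT _ J₀ hJ₀gen A hA with rfl | hd
  · exact subset_antisymm hKA hJK
  · obtain ⟨a, ha⟩ := hne
    exact absurd (hKA (hJK (hIJ₀ ha))) (Set.disjoint_left.1 hd (hIJ₀ ha))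

lemma tree_nested_or_disjoint (hT : IsTree μ T C) {I J : Set X}
    (hI : I ∈ T) (hJ : J ∈ T) : I ⊆ J ∨ J ⊆ I ∨ Disjoint I J := by
  rw [hT.eq_gen] at hI hJ
  obtain ⟨m, hIm⟩ := Set.mem_iUnion.1 hI
  obtain ⟨n, hJn⟩ := Set.mem_iUnion.1 hJ
  rcases le_total m n with h | h
  · obtain ⟨A, hA, hJA⟩ := treeGen_ancestor hT n m h J hJn
    rcases treeGen_disj hT m I hIm A hA with rfl | hd
    · exact Or.inr (Or.inl hJA)
    · exact Or.inr (Or.inr (hd.mono_right hJA))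
  · obtain ⟨A, hA, hIA⟩ := treeGen_ancestor hT m n h I hIm
    rcases treeGen_disj hT n J hJn A hA with rfl | hd
    · exact Or.inl hIA
    · exact Or.inr (Or.inr ((hd.mono_right hIA).symm))

end Aux

/-- comparison of distribution sets of `(M_T φ)*` and of the running average. -/
theorem statement15 {X : Type*} [MeasurableSpace X] (μ : Measure X)
    [IsProbabilityMeasure μ] [NullSingletonClass μ]
    (T : Set (Set X)) (C : Set X → Set (Set X)) (hT : IsTree μ T C)
    (g : ℝ → ℝ) (hg_anti : AntitoneOn g (Set.Ioc 0 1))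
    (hg0 : ∀ t ∈ Set.Ioc (0:ℝ) 1, 0 ≤ g t) (hg_int : IntegrableOn g (Set.Ioc 0 1))
    (f : ℝ) (hf : f = ∫ u in Set.Ioc (0:ℝ) 1, g u)
    (φ : X → ℝ) (hφm : Measurable φ) (hφ0 : ∀ x, 0 ≤ φ x)
    (hφg : HasRearrangement μ φ g)
    (l : ℝ) (hl : f < l) :
    volume {t ∈ Set.Ioc (0:ℝ) 1 | l ≤ decRearr μ (maxT μ T φ) t} ≤
      volume {t ∈ Set.Ioc (0:ℝ) 1 | l ≤ (∫ u in Set.Ioc (0:ℝ) t, g u) / t} := by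
  classical
  set M := maxT μ T φ with hM
  have hf0 : 0 ≤ f := hf ▸ setIntegral_nonneg measurableSet_Ioc hg0
  -- φ pointwise facts
  have habs : ∀ u, |φ u| = φ u := fun u => abs_of_nonneg (hφ0 u)
  -- distribution identity in intersection form
  have hφg' : ∀ s : ℝ, 0 ≤ s →
      μ {x | s < φ x} = volume ({u | s < g u} ∩ Set.Ioc (0:ℝ) 1) := by
    intro s hs
    rw [hφg s hs]
    congr 1
    ext u
    simp only [Set.mem_sep_iff, Set.mem_inter_iff, Set.mem_setOf_eq]
    tauto
  -- integrability of φ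
  have hφ_lint : ∫⁻ x, ENNReal.ofReal (φ x) ∂μ
      = ∫⁻ u, ENNReal.ofReal (g u) ∂(volume.restrict (Set.Ioc (0:ℝ) 1)) := by
    rw [lintegral_eq_lintegral_meas_lt μ (ae_of_all _ hφ0) hφm.aemeasurable,
      lintegral_eq_lintegral_meas_lt (volume.restrict (Set.Ioc (0:ℝ) 1))
        ((ae_restrict_iff' measurableSet_Ioc).2 (ae_of_all _ hg0))
        hg_int.aemeasurable]
    refine setLIntegral_congr_fun measurableSet_Ioi (fun s hs => ?_)
    rw [hφg' s (le_of_lt hs), Measure.restrict_apply' measurableSet_Ioc]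
  have hg1_fin : ∫⁻ u, ENNReal.ofReal (g u) ∂(volume.restrict (Set.Ioc (0:ℝ) 1)) < ⊤ := by
    refine lt_of_le_of_lt (lintegral_mono fun u => ?_) hg_int.2
    exact Real.ofReal_le_enorm (g u)
  have hφ_int : Integrable φ μ := by
    refine ⟨hφm.aestronglyMeasurable, ?_⟩
    rw [hasFiniteIntegral_iff_norm]
    calc ∫⁻ x, ENNReal.ofReal ‖φ x‖ ∂μ = ∫⁻ x, ENNReal.ofReal (φ x) ∂μ := by
          congr 1; funext x; rw [Real.norm_eq_abs, habs]
      _ < ⊤ := hφ_lint ▸ hg1_fin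
  -- M is nonnegative
  have hM0 : ∀ x, 0 ≤ M x := by
    intro x
    apply Real.sSup_nonneg
    rintro r ⟨I, hI, hxI, rfl⟩
    exact div_nonneg (integral_nonneg fun u => abs_nonneg _) ENNReal.toReal_nonneg
  -- main inclusion
  apply measure_mono
  rintro t ⟨ht, hdec⟩
  refine ⟨ht, ?_⟩
  set A := (∫ u in Set.Ioc (0:ℝ) t, g u) / t with hA
  by_contra hAl
  push_neg at hAl
  set lam := (max f A + l) / 2 with hlam
  have hflam : f < lam := by
    have := le_max_left f A; simp only [hlam]; linarith [max_lt hl hAl]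
  have hAlam : A < lam := by
    have := le_max_right f A; simp only [hlam]; linarith [max_lt hl hAl]
  have hlaml : lam < l := by simp only [hlam]; linarith [max_lt hl hAl]
  have hlam0 : 0 < lam := lt_of_le_of_lt hf0 hflam
  -- extract a set e of measure t inside {lam < M}
  have hlt : lam < decRearr μ M t := lt_of_lt_of_le hlaml hdec
  have hSne : {r : ℝ | ∃ e : Set X, μ e = ENNReal.ofReal t ∧ r = sInf (M '' e)}.Nonempty := by
    by_contra h
    rw [Set.not_nonempty_iff_eq_empty] at h
    rw [decRearr, h, Real.sSup_empty] at hlt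
    exact absurd hlt (not_lt.2 hlam0.le)
  obtain ⟨r, ⟨e, he, rfl⟩, hre⟩ := exists_lt_of_lt_csSup hSne hlt
  have heM : ∀ x ∈ e, lam < M x := by
    intro x hx
    refine lt_of_lt_of_le hre (csInf_le ?_ (Set.mem_image_of_mem M hx))
    exact ⟨0, by rintro r ⟨y, _, rfl⟩; exact hM0 y⟩
  -- the stopping family
  set F : Set (Set X) := {I | I ∈ T ∧ lam * (μ I).toReal < ∫ u in I, φ u ∂μ} with hF
  have hFT : F ⊆ T := fun I hI => hI.1
  have hcover : ∀ x, lam < M x → ∃ I ∈ F, x ∈ I := by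
    intro x hx
    have hSxne : {r : ℝ | ∃ I ∈ T, x ∈ I ∧ r = (∫ u in I, |φ u| ∂μ) / (μ I).toReal}.Nonempty := by
      by_contra h
      rw [Set.not_nonempty_iff_eq_empty] at h
      rw [hM, maxT, h, Real.sSup_empty] at hx
      exact absurd hx (not_lt.2 hlam0.le)
    obtain ⟨r, ⟨I, hI, hxI, rfl⟩, hr⟩ := exists_lt_of_lt_csSup hSxne hx
    have hpos : 0 < (μ I).toReal := ENNReal.toReal_pos (hT.pos I hI).ne' (measure_ne_top μ I)
    refine ⟨I, ⟨hI, ?_⟩, hxI⟩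
    have := (lt_div_iff₀ hpos).1 hr
    simpa only [habs] using this
  -- maximal disjoint subfamily
  set Fmax : Set (Set X) := {I | I ∈ F ∧ ∀ K ∈ F, I ⊆ K → K = I} with hFmax
  set U : Set X := ⋃₀ Fmax with hU
  have hFmaxT : Fmax ⊆ T := fun I hI => hFT hI.1
  have hFmax_cnt : Fmax.Countable := (tree_countable hT).mono hFmaxT
  have hFmax_meas : ∀ I ∈ Fmax, MeasurableSet I := fun I hI => hT.measurableSet I (hFmaxT hI)
  have hFmax_disj : Fmax.Pairwise Disjoint := by
    intro I hI J hJ hne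
    rcases tree_nested_or_disjoint hT (hFmaxT hI) (hFmaxT hJ) with h | h | h
    · exact absurd (hI.2 J hJ.1 h).symm hne
    · exact absurd (hJ.2 I hI.1 h) hne
    · exact h
  have hUmeas : MeasurableSet U := MeasurableSet.sUnion hFmax_cnt hFmax_meas
  have heU : e ⊆ U := by
    intro x hx
    obtain ⟨I, hIF, hxI⟩ := hcover x (heM x hx)
    have hne : I.Nonempty := nonempty_of_measure_ne_zero (hT.pos I hIF.1).ne'
    obtain ⟨J, hJF, hIJ, hmax⟩ := tree_exists_maximal hT hFT hIF hne
    exact ⟨J, ⟨hJF, hmax⟩, hIJ hxI⟩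
  -- α and basic bounds
  set α := (μ U).toReal with hα
  have hUne_top : μ U ≠ ⊤ := measure_ne_top μ U
  have hα1 : α ≤ 1 := by
    have h1 : μ U ≤ 1 := prob_le_one
    calc α ≤ (1 : ℝ≥0∞).toReal := ENNReal.toReal_mono (by simp) h1
      _ = 1 := by simp
  have htα : t ≤ α := by
    have h1 : ENNReal.ofReal t ≤ μ U := he ▸ measure_mono heU
    exact (ENNReal.ofReal_le_iff_le_toReal hUne_top).1 h1
  have ht0 : 0 < t := ht.1
  have hα0 : 0 < α := lt_of_lt_of_le ht0 htα
  -- weak type inequality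
  have hcnt : Countable ↥Fmax := hFmax_cnt.to_subtype
  have hUeq : U = ⋃ (I : Fmax), (I : Set X) := by rw [hU, Set.sUnion_eq_iUnion]
  have hd : Pairwise (Function.onFun Disjoint fun I : Fmax => (I : Set X)) := fun I J hne =>
    hFmax_disj I.2 J.2 (Subtype.coe_injective.ne hne)
  have hm : ∀ I : Fmax, MeasurableSet (I : Set X) := fun I => hFmax_meas I I.2
  have hμU : μ U = ∑' I : Fmax, μ (I : Set X) := by
    rw [hUeq]; exact measure_iUnion hd hm
  have hμU' : α = ∑' I : Fmax, (μ (I : Set X)).toReal := by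
    rw [hα, hμU, ENNReal.tsum_toReal_eq (fun I => measure_ne_top μ _)]
  have hintU : IntegrableOn φ (⋃ (I : Fmax), (I : Set X)) μ := hφ_int.integrableOn
  have hint : ∫ x in U, φ x ∂μ = ∑' I : Fmax, ∫ x in (I : Set X), φ x ∂μ := by
    rw [hUeq]; exact integral_iUnion hm hd hintU
  have hSmeas : Summable fun I : Fmax => (μ (I : Set X)).toReal :=
    ENNReal.summable_toReal (by rw [← hμU]; exact hUne_top)
  have hSint : Summable fun I : Fmax => ∫ x in (I : Set X), φ x ∂μ :=
    (hasSum_integral_iUnion hm hd hintU).summable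
  have hweak : lam * α ≤ ∫ x in U, φ x ∂μ := by
    calc lam * α = ∑' I : Fmax, lam * (μ (I : Set X)).toReal := by
          rw [hμU', tsum_mul_left]
      _ ≤ ∑' I : Fmax, ∫ x in (I : Set X), φ x ∂μ :=
          Summable.tsum_le_tsum (fun I => (I.2.1.2).le) (hSmeas.mul_left lam) hSint
      _ = ∫ x in U, φ x ∂μ := hint.symm
  -- Hardy–Littlewood type bound
  have hgα_int : IntegrableOn g (Set.Ioc (0:ℝ) α) :=
    hg_int.mono_set (Set.Ioc_subset_Ioc_right hα1)
  have hgα_nn : 0 ≤ᵐ[volume.restrict (Set.Ioc (0:ℝ) α)] g :=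
    (ae_restrict_iff' measurableSet_Ioc).2 (ae_of_all _ fun u hu =>
      hg0 u ⟨hu.1, hu.2.trans hα1⟩)
  have hHL : ∫ x in U, φ x ∂μ ≤ ∫ u in Set.Ioc (0:ℝ) α, g u := by
    have hkey : ∀ s ∈ Set.Ioi (0:ℝ),
        (μ.restrict U) {x | s < φ x} ≤ (volume.restrict (Set.Ioc (0:ℝ) α)) {u | s < g u} := by
      intro s hs
      rw [Measure.restrict_apply' hUmeas, Measure.restrict_apply' measurableSet_Ioc]
      set c := volume ({u | s < g u} ∩ Set.Ioc (0:ℝ) 1) with hc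
      rcases le_total c (ENNReal.ofReal α) with hcase | hcase
      · have hsub : {u | s < g u} ∩ Set.Ioc (0:ℝ) 1 ⊆ {u | s < g u} ∩ Set.Ioc (0:ℝ) α := by
          rintro u ⟨hgu, hu0, hu1⟩
          refine ⟨hgu, hu0, ?_⟩
          by_contra hcon
          push_neg at hcon
          have hIoc : Set.Ioc (0:ℝ) u ⊆ {u | s < g u} ∩ Set.Ioc (0:ℝ) 1 := by
            rintro v ⟨hv0, hvu⟩
            exact ⟨lt_of_lt_of_le hgu (hg_anti ⟨hv0, hvu.trans hu1⟩ ⟨hu0, hu1⟩ hvu),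
              hv0, hvu.trans hu1⟩
          have h1 : ENNReal.ofReal u ≤ c := by
            rw [hc]
            calc ENNReal.ofReal u = volume (Set.Ioc (0:ℝ) u) := by
                  rw [Real.volume_Ioc, sub_zero]
              _ ≤ _ := measure_mono hIoc
          have h2 : ENNReal.ofReal α < ENNReal.ofReal u :=
            (ENNReal.ofReal_lt_ofReal_iff hu0).2 hcon
          exact absurd (h1.trans hcase) (not_le.2 h2)
        calc μ ({x | s < φ x} ∩ U) ≤ μ {x | s < φ x} := measure_mono Set.inter_subset_left
          _ = c := hφg' s hs.le
          _ ≤ volume ({u | s < g u} ∩ Set.Ioc (0:ℝ) α) := hc ▸ measure_mono hsub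
      · have hsub : Set.Ioo (0:ℝ) α ⊆ {u | s < g u} ∩ Set.Ioc (0:ℝ) α := by
          rintro v ⟨hv0, hvα⟩
          refine ⟨show s < g v from ?_, hv0, hvα.le⟩
          by_contra hcon
          push_neg at hcon
          have hS : {u | s < g u} ∩ Set.Ioc (0:ℝ) 1 ⊆ Set.Ioo (0:ℝ) v := by
            rintro u ⟨hgu, hu0, hu1⟩
            refine ⟨hu0, ?_⟩
            by_contra h2
            push_neg at h2
            exact absurd (lt_of_lt_of_le hgu
              (hg_anti ⟨hv0, hvα.le.trans hα1⟩ ⟨hu0, hu1⟩ h2)) (not_lt.2 hcon)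
          have h1 : c ≤ ENNReal.ofReal v := by
            rw [hc]
            calc volume ({u | s < g u} ∩ Set.Ioc (0:ℝ) 1) ≤ volume (Set.Ioo (0:ℝ) v) :=
                  measure_mono hS
              _ = ENNReal.ofReal v := by rw [Real.volume_Ioo, sub_zero]
          have h2 : ENNReal.ofReal v < ENNReal.ofReal α :=
            (ENNReal.ofReal_lt_ofReal_iff hα0).2 hvα
          exact absurd (hcase.trans h1) (not_le.2 h2)
        calc μ ({x | s < φ x} ∩ U) ≤ μ U := measure_mono Set.inter_subset_right
          _ = ENNReal.ofReal α := (ENNReal.ofReal_toReal hUne_top).symm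
          _ = volume (Set.Ioo (0:ℝ) α) := by rw [Real.volume_Ioo, sub_zero]
          _ ≤ _ := measure_mono hsub
    have hlhs : ∫ x in U, φ x ∂μ
        = (∫⁻ x, ENNReal.ofReal (φ x) ∂(μ.restrict U)).toReal := by
      rw [integral_eq_lintegral_of_nonneg_ae (ae_of_all _ hφ0) hφm.aestronglyMeasurable.restrict]
    have hrhs : ∫ u in Set.Ioc (0:ℝ) α, g u
        = (∫⁻ u, ENNReal.ofReal (g u) ∂(volume.restrict (Set.Ioc (0:ℝ) α))).toReal := by
      rw [integral_eq_lintegral_of_nonneg_ae hgα_nn hgα_int.aestronglyMeasurable]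
    have hle : ∫⁻ x, ENNReal.ofReal (φ x) ∂(μ.restrict U)
        ≤ ∫⁻ u, ENNReal.ofReal (g u) ∂(volume.restrict (Set.Ioc (0:ℝ) α)) := by
      rw [lintegral_eq_lintegral_meas_lt (μ.restrict U) (ae_of_all _ hφ0)
          hφm.aemeasurable.restrict,
        lintegral_eq_lintegral_meas_lt (volume.restrict (Set.Ioc (0:ℝ) α)) hgα_nn
          hgα_int.aemeasurable]
      exact lintegral_mono_ae ((ae_restrict_iff' measurableSet_Ioi).2 (ae_of_all _ hkey))
    have hfin : ∫⁻ u, ENNReal.ofReal (g u) ∂(volume.restrict (Set.Ioc (0:ℝ) α)) ≠ ⊤ :=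
      (lt_of_le_of_lt (lintegral_mono fun u => Real.ofReal_le_enorm (g u)) hgα_int.2).ne
    rw [hlhs, hrhs]
    exact ENNReal.toReal_mono hfin hle
  -- averaging estimate
  have ht1 : t ≤ 1 := ht.2
  have hgt_int : IntegrableOn g (Set.Ioc (0:ℝ) t) := hg_int.mono_set (Set.Ioc_subset_Ioc_right ht1)
  have hgtα_int : IntegrableOn g (Set.Ioc t α) := hgα_int.mono_set (Set.Ioc_subset_Ioc_left ht0.le)
  have hsplit : ∫ u in Set.Ioc (0:ℝ) α, g u
      = (∫ u in Set.Ioc (0:ℝ) t, g u) + ∫ u in Set.Ioc t α, g u := by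
    rw [← Set.Ioc_union_Ioc_eq_Ioc ht0.le htα]
    exact setIntegral_union (Set.Ioc_disjoint_Ioc_of_le le_rfl) measurableSet_Ioc hgt_int hgtα_int
  have hbound : ∀ u ∈ Set.Ioc t α, g u ≤ A := by
    intro u hu
    have hu01 : u ∈ Set.Ioc (0:ℝ) 1 := ⟨ht0.trans hu.1, hu.2.trans hα1⟩
    have h1 : t * g u ≤ ∫ v in Set.Ioc (0:ℝ) t, g v := by
      have hconst : ∫ _ in Set.Ioc (0:ℝ) t, g u = t * g u := by
        rw [setIntegral_const, Real.volume_real_Ioc_of_le ht0.le, sub_zero,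
          smul_eq_mul]
      rw [← hconst]
      refine setIntegral_mono_on (integrableOn_const ?_) hgt_int measurableSet_Ioc ?_
      · rw [Real.volume_Ioc]; exact ENNReal.ofReal_lt_top.ne
      · intro v hv
        exact hg_anti ⟨hv.1, hv.2.trans ht1⟩ hu01 (hv.2.trans hu.1.le)
    rw [hA, le_div_iff₀ ht0]
    linarith
  have htail : ∫ u in Set.Ioc t α, g u ≤ (α - t) * A := by
    have hconst : ∫ _ in Set.Ioc t α, A = (α - t) * A := by
      rw [setIntegral_const, Real.volume_real_Ioc_of_le htα, smul_eq_mul]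
    rw [← hconst]
    refine setIntegral_mono_on hgtα_int (integrableOn_const ?_) measurableSet_Ioc
      hbound
    rw [Real.volume_Ioc]; exact ENNReal.ofReal_lt_top.ne
  have hAt : ∫ u in Set.Ioc (0:ℝ) t, g u = t * A := by
    rw [hA]; field_simp
  have hfinal : lam * α ≤ A * α := by
    have : lam * α ≤ α * A := by
      calc lam * α ≤ ∫ x in U, φ x ∂μ := hweak
        _ ≤ ∫ u in Set.Ioc (0:ℝ) α, g u := hHL
        _ ≤ t * A + (α - t) * A := by rw [hsplit, hAt]; linarith
        _ = α * A := by ring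
    linarith
  exact absurd ((mul_le_mul_iff_of_pos_right hα0).1 hfinal) (not_le.2 hAlam)
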